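/- arXiv:1412.2219 — 2 statements merged into one kernel-verified Lean document; each statement's English description precedes it below -/
import Mathlib

section
/- Generation lemma for λ®∩: (i) Γ ⊢ λx.M : τ iff τ = α→σ and Γ,x:α ⊢ M:σ; (ii) Γ ⊢ MN:σ iff Γ splits as Γ', Δ₀^⊤⊓Δ₁⊓…⊓Δₙ with Γ' ⊢ M:∩ᵢⁿτᵢ→σ and Δᵢ ⊢ N:τᵢ for all i; (iii) Γ ⊢ z<x,y>M : σ iff Γ = Γ',z:α∩β and Γ',x:α,y:β ⊢ M:σ; (iv) Γ ⊢ x⊙M : σ iff Γ = Γ',x:⊤ and Γ' ⊢ M:σ. -/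
namespace RC

/-- Raw terms of the resource control lambda calculus λ® extended with
an explicit substitution operator (λ®^[/]). -/
inductive RTerm : Type
  | var : ℕ → RTerm
  | abs : ℕ → RTerm → RTerm
  | app : RTerm → RTerm → RTerm
  | era : ℕ → RTerm → RTerm              -- x ⊙ M   (erasure)
  | dup : ℕ → ℕ → ℕ → RTerm → RTerm      -- x<x₁,x₂>M  (duplication)
  | sub : RTerm → ℕ → RTerm → RTerm      -- M[N/x]  (explicit substitution)
  deriving DecidableEq

/-- Free variables. -/
def fv : RTerm → Finset ℕ
  | .var x => {x}
  | .abs x M => fv M \ {x}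
  | .app M N => fv M ∪ fv N
  | .era x M => insert x (fv M)
  | .dup x x₁ x₂ M => insert x (fv M \ {x₁, x₂})
  | .sub M x N => (fv M \ {x}) ∪ fv N

/-- Substitution-free terms (raw λ®-terms). -/
def SubFree : RTerm → Prop
  | .var _ => True
  | .abs _ M => SubFree M
  | .app M N => SubFree M ∧ SubFree N
  | .era _ M => SubFree M
  | .dup _ _ _ M => SubFree M
  | .sub _ _ _ => False

/-- Well-formed λ®^[/]-terms (linearity conditions).  A λ®-term is a
well-formed substitution-free term. -/
inductive WF : RTerm → Prop
  | var (x : ℕ) : WF (.var x)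
  | abs {M : RTerm} {x : ℕ} : WF M → x ∈ fv M → WF (.abs x M)
  | app {M N : RTerm} : WF M → WF N → Disjoint (fv M) (fv N) → WF (.app M N)
  | era {M : RTerm} {x : ℕ} : WF M → x ∉ fv M → WF (.era x M)
  | dup {M : RTerm} {x x₁ x₂ : ℕ} : WF M → x₁ ∈ fv M → x₂ ∈ fv M → x₁ ≠ x₂ →
      x ∉ fv M \ {x₁, x₂} → WF (.dup x x₁ x₂ M)
  | sub {M N : RTerm} {x : ℕ} : WF M → x ∈ fv M → WF N → SubFree N →
      Disjoint (fv M \ {x}) (fv N) → WF (.sub M x N)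

/-- Iterated erasure `x₁⊙…⊙xₙ⊙M` over a list of variables. -/
def eraList : List ℕ → RTerm → RTerm
  | [], M => M
  | x :: L, M => .era x (eraList L M)

/-- Iterated duplication `x₁<ρ₁x₁,ρ₂x₁>…xₙ<ρ₁xₙ,ρ₂xₙ>M`. -/
def dupList (ρ₁ ρ₂ : ℕ → ℕ) : List ℕ → RTerm → RTerm
  | [], M => M
  | x :: L, M => .dup x (ρ₁ x) (ρ₂ x) (dupList ρ₁ ρ₂ L M)

/-- Renaming of (all) variables of a term. -/
def rename (ρ : ℕ → ℕ) : RTerm → RTerm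
  | .var x => .var (ρ x)
  | .abs x M => .abs (ρ x) (rename ρ M)
  | .app M N => .app (rename ρ M) (rename ρ N)
  | .era x M => .era (ρ x) (rename ρ M)
  | .dup x x₁ x₂ M => .dup (ρ x) (ρ x₁) (ρ x₂) (rename ρ M)
  | .sub M x N => .sub (rename ρ M) (ρ x) (rename ρ N)

/-- The list of free variables of a term (sorted). -/
def fvList (M : RTerm) : List ℕ := (fv M).sort (· ≤ ·)

/-- Root steps of the evaluation of the explicit substitution operator. -/
inductive SubStep : RTerm → RTerm → Prop
  | var (x : ℕ) (N : RTerm) : SubStep (.sub (.var x) x N) N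
  | abs {x y : ℕ} {M N : RTerm} : x ≠ y →
      SubStep (.sub (.abs y M) x N) (.abs y (.sub M x N))
  | appL {x : ℕ} {M P N : RTerm} : x ∈ fv M →
      SubStep (.sub (.app M P) x N) (.app (.sub M x N) P)
  | appR {x : ℕ} {M P N : RTerm} : x ∈ fv P →
      SubStep (.sub (.app M P) x N) (.app M (.sub P x N))
  | eraNe {x y : ℕ} {M N : RTerm} : x ≠ y →
      SubStep (.sub (.era y M) x N) (.era y (.sub M x N))
  | eraEq {x : ℕ} {M N : RTerm} :
      SubStep (.sub (.era x M) x N) (eraList (fvList N) M)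
  | dupNe {x y y₁ y₂ : ℕ} {M N : RTerm} : x ≠ y →
      SubStep (.sub (.dup y y₁ y₂ M) x N) (.dup y y₁ y₂ (.sub M x N))
  | dupEq {x x₁ x₂ : ℕ} {M N : RTerm} {ρ₁ ρ₂ : ℕ → ℕ} :
      Set.InjOn ρ₁ (fv N) → Set.InjOn ρ₂ (fv N) →
      (∀ y ∈ fv N, ρ₁ y ∉ fv M ∪ fv N ∧ ρ₂ y ∉ fv M ∪ fv N) →
      (∀ y ∈ fv N, ∀ z ∈ fv N, ρ₁ y ≠ ρ₂ z) →
      SubStep (.sub (.dup x x₁ x₂ M) x N)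
        (dupList ρ₁ ρ₂ (fvList N)
          (.sub (.sub M x₁ (rename ρ₁ N)) x₂ (rename ρ₂ N)))

/-- One step of substitution evaluation, closed under contexts. -/
inductive SStep : RTerm → RTerm → Prop
  | root {M N : RTerm} : SubStep M N → SStep M N
  | abs {x : ℕ} {M M' : RTerm} : SStep M M' → SStep (.abs x M) (.abs x M')
  | appL {M M' N : RTerm} : SStep M M' → SStep (.app M N) (.app M' N)
  | appR {M N N' : RTerm} : SStep N N' → SStep (.app M N) (.app M N')
  | era {x : ℕ} {M M' : RTerm} : SStep M M' → SStep (.era x M) (.era x M')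
  | dup {x x₁ x₂ : ℕ} {M M' : RTerm} : SStep M M' →
      SStep (.dup x x₁ x₂ M) (.dup x x₁ x₂ M')
  | subL {x : ℕ} {M M' N : RTerm} : SStep M M' → SStep (.sub M x N) (.sub M' x N)
  | subR {x : ℕ} {M N N' : RTerm} : SStep N N' → SStep (.sub M x N) (.sub M x N')

/-- Many-step substitution evaluation. -/
def SSteps : RTerm → RTerm → Prop := Relation.ReflTransGen SStep

/-- Normal forms for substitution evaluation. -/
def NormalS (M : RTerm) : Prop := ∀ N, ¬ SStep M N

/-- Root reduction rules of λ®.  Substitution `M⟨N/x⟩` is characterised as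
the (unique) substitution-evaluation normal form of `M[N/x]`. -/
inductive HeadStep : RTerm → RTerm → Prop
  | beta {x : ℕ} {M N P : RTerm} : SSteps (.sub M x N) P → NormalS P →
      HeadStep (.app (.abs x M) N) P
  | gamma1 {x x₁ x₂ y : ℕ} {M : RTerm} :
      HeadStep (.dup x x₁ x₂ (.abs y M)) (.abs y (.dup x x₁ x₂ M))
  | gamma2 {x x₁ x₂ : ℕ} {M N : RTerm} : x₁ ∉ fv N → x₂ ∉ fv N →
      HeadStep (.dup x x₁ x₂ (.app M N)) (.app (.dup x x₁ x₂ M) N)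
  | gamma3 {x x₁ x₂ : ℕ} {M N : RTerm} : x₁ ∉ fv M → x₂ ∉ fv M →
      HeadStep (.dup x x₁ x₂ (.app M N)) (.app M (.dup x x₁ x₂ N))
  | omega1 {x y : ℕ} {M : RTerm} : x ≠ y →
      HeadStep (.abs x (.era y M)) (.era y (.abs x M))
  | omega2 {x : ℕ} {M N : RTerm} :
      HeadStep (.app (.era x M) N) (.era x (.app M N))
  | omega3 {x : ℕ} {M N : RTerm} :
      HeadStep (.app M (.era x N)) (.era x (.app M N))
  | gammaOmega1 {x x₁ x₂ y : ℕ} {M : RTerm} : y ≠ x₁ → y ≠ x₂ →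
      HeadStep (.dup x x₁ x₂ (.era y M)) (.era y (.dup x x₁ x₂ M))
  | gammaOmega2 {x x₁ x₂ : ℕ} {M P : RTerm} :
      SSteps (.sub M x₂ (.var x)) P → NormalS P →
      HeadStep (.dup x x₁ x₂ (.era x₁ M)) P

/-- Structural equivalence ≡ of λ®. -/
inductive SEquiv : RTerm → RTerm → Prop
  | eps1 {x y : ℕ} {M : RTerm} : SEquiv (.era x (.era y M)) (.era y (.era x M))
  | eps2 {x x₁ x₂ : ℕ} {M : RTerm} : SEquiv (.dup x x₁ x₂ M) (.dup x x₂ x₁ M)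
  | eps3 {x y z u v : ℕ} {M : RTerm} :
      SEquiv (.dup x y z (.dup y u v M)) (.dup x y u (.dup y z v M))
  | eps4 {x x₁ x₂ y y₁ y₂ : ℕ} {M : RTerm} : x ≠ y₁ → x ≠ y₂ → y ≠ x₁ → y ≠ x₂ →
      SEquiv (.dup x x₁ x₂ (.dup y y₁ y₂ M)) (.dup y y₁ y₂ (.dup x x₁ x₂ M))
  | refl (M : RTerm) : SEquiv M M
  | symm {M N : RTerm} : SEquiv M N → SEquiv N M
  | trans {M N P : RTerm} : SEquiv M N → SEquiv N P → SEquiv M P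
  | abs {x : ℕ} {M M' : RTerm} : SEquiv M M' → SEquiv (.abs x M) (.abs x M')
  | appL {M M' N : RTerm} : SEquiv M M' → SEquiv (.app M N) (.app M' N)
  | appR {M N N' : RTerm} : SEquiv N N' → SEquiv (.app M N) (.app M N')
  | era {x : ℕ} {M M' : RTerm} : SEquiv M M' → SEquiv (.era x M) (.era x M')
  | dup {x x₁ x₂ : ℕ} {M M' : RTerm} : SEquiv M M' →
      SEquiv (.dup x x₁ x₂ M) (.dup x x₁ x₂ M')

/-- Contextual closure of the root reduction rules. -/
inductive CStep : RTerm → RTerm → Prop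
  | root {M N : RTerm} : HeadStep M N → CStep M N
  | abs {x : ℕ} {M M' : RTerm} : CStep M M' → CStep (.abs x M) (.abs x M')
  | appL {M M' N : RTerm} : CStep M M' → CStep (.app M N) (.app M' N)
  | appR {M N N' : RTerm} : CStep N N' → CStep (.app M N) (.app M N')
  | era {x : ℕ} {M M' : RTerm} : CStep M M' → CStep (.era x M) (.era x M')
  | dup {x x₁ x₂ : ℕ} {M M' : RTerm} : CStep M M' →
      CStep (.dup x x₁ x₂ M) (.dup x x₁ x₂ M')

/-- One-step λ®-reduction: reduction closed under contexts and
structural equivalence. -/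
def Red (M N : RTerm) : Prop := ∃ M' N', SEquiv M M' ∧ CStep M' N' ∧ SEquiv N' N

/-- Many-step λ®-reduction. -/
def Reds : RTerm → RTerm → Prop := Relation.ReflTransGen Red

/-- Strongly normalising λ®-terms. -/
def SNt (M : RTerm) : Prop := Acc (fun a b => Red b a) M

/-- Iterated application `h T₁ … Tₙ`. -/
def appList (h : RTerm) (Ms : List RTerm) : RTerm := Ms.foldl .app h

/-! ### Intersection types -/

/-- Strict types; an intersection type `∩ᵢⁿσᵢ` is represented by the list of
its components (`[]` is `⊤`). -/
inductive SType : Type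
  | atom : ℕ → SType
  | arrow : List SType → SType → SType

/-- Intersection types. -/
abbrev ITy := List SType

/-- Bases: finite-domain assignments of intersection types to variables. -/
abbrev Ctx := ℕ → Option ITy

def emptyCtx : Ctx := fun _ => none

/-- Basis extension `Γ, x:α`. -/
def extend (Γ : Ctx) (x : ℕ) (a : ITy) : Ctx := fun y => if y = x then some a else Γ y

/-- Pointwise bases intersection `Γ ⊓ Δ`. -/
def ctxInter (Γ Δ : Ctx) : Ctx := fun x =>
  match Γ x, Δ x with
  | some a, some b => some (a ++ b)
  | _, _ => none

/-- `Γ^⊤`: every variable of the domain gets type ⊤. -/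
def topify (Γ : Ctx) : Ctx := fun x => (Γ x).map fun _ => ([] : ITy)

/-- `Δ₀^⊤ ⊓ Δ₁ ⊓ … ⊓ Δₙ`. -/
def interFin (D0 : Ctx) {n : ℕ} (Ds : Fin n → Ctx) : Ctx :=
  (List.ofFn Ds).foldl ctxInter (topify D0)

/-- Combination `Γ, Δ` of bases with disjoint domains. -/
def ctxUnion (Γ Δ : Ctx) : Ctx := fun x => (Δ x).orElse fun _ => Γ x

def ctxDisj (Γ Δ : Ctx) : Prop := ∀ x, Γ x = none ∨ Δ x = none

def sameDom (Γ Δ : Ctx) : Prop := ∀ x, Γ x = none ↔ Δ x = none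

def ctxDom (Γ : Ctx) : Set ℕ := {x | Γ x ≠ none}

/-- The intersection type assignment system λ®∩. -/
inductive Has : Ctx → RTerm → SType → Prop
  | ax (x : ℕ) (σ : SType) : Has (extend emptyCtx x [σ]) (.var x) σ
  | arrI {Γ : Ctx} {x : ℕ} {a : ITy} {M : RTerm} {σ : SType} :
      Γ x = none → Has (extend Γ x a) M σ →
      Has Γ (.abs x M) (.arrow a σ)
  | arrE {Γ : Ctx} {M N : RTerm} {σ : SType} {ts : List SType}
      {D0 : Ctx} {t0 : SType} {Ds : Fin ts.length → Ctx} :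
      Has Γ M (.arrow ts σ) →
      Has D0 N t0 →
      (∀ i : Fin ts.length, Has (Ds i) N (ts.get i)) →
      (∀ i, sameDom (Ds i) D0) →
      ctxDisj Γ (interFin D0 Ds) →
      Has (ctxUnion Γ (interFin D0 Ds)) (.app M N) σ
  | cont {Γ : Ctx} {x y z : ℕ} {a b : ITy} {M : RTerm} {σ : SType} :
      x ≠ y → Γ x = none → Γ y = none → Γ z = none →
      Has (extend (extend Γ x a) y b) M σ →
      Has (extend Γ z (a ++ b)) (.dup z x y M) σ
  | thin {Γ : Ctx} {x : ℕ} {M : RTerm} {σ : SType} :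
      Γ x = none → Has Γ M σ → Has (extend Γ x []) (.era x M) σ

/-- The extended system λ®^[/]∩ with the (Subst) rule. -/
inductive HasS : Ctx → RTerm → SType → Prop
  | ax (x : ℕ) (σ : SType) : HasS (extend emptyCtx x [σ]) (.var x) σ
  | arrI {Γ : Ctx} {x : ℕ} {a : ITy} {M : RTerm} {σ : SType} :
      Γ x = none → HasS (extend Γ x a) M σ →
      HasS Γ (.abs x M) (.arrow a σ)
  | arrE {Γ : Ctx} {M N : RTerm} {σ : SType} {ts : List SType}
      {D0 : Ctx} {t0 : SType} {Ds : Fin ts.length → Ctx} :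
      HasS Γ M (.arrow ts σ) →
      HasS D0 N t0 →
      (∀ i : Fin ts.length, HasS (Ds i) N (ts.get i)) →
      (∀ i, sameDom (Ds i) D0) →
      ctxDisj Γ (interFin D0 Ds) →
      HasS (ctxUnion Γ (interFin D0 Ds)) (.app M N) σ
  | cont {Γ : Ctx} {x y z : ℕ} {a b : ITy} {M : RTerm} {σ : SType} :
      x ≠ y → Γ x = none → Γ y = none → Γ z = none →
      HasS (extend (extend Γ x a) y b) M σ →
      HasS (extend Γ z (a ++ b)) (.dup z x y M) σ
  | thin {Γ : Ctx} {x : ℕ} {M : RTerm} {σ : SType} :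
      Γ x = none → HasS Γ M σ → HasS (extend Γ x []) (.era x M) σ
  | subst {Γ : Ctx} {M N : RTerm} {x : ℕ} {σ : SType} {ts : List SType}
      {D0 : Ctx} {t0 : SType} {Ds : Fin ts.length → Ctx} :
      Γ x = none →
      HasS (extend Γ x ts) M σ →
      HasS D0 N t0 →
      (∀ i : Fin ts.length, HasS (Ds i) N (ts.get i)) →
      (∀ i, sameDom (Ds i) D0) →
      ctxDisj Γ (interFin D0 Ds) →
      HasS (ctxUnion Γ (interFin D0 Ds)) (.sub M x N) σ


/-- Generation lemma for λ®∩. -/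
theorem generation_lemma :
    (∀ (Γ : Ctx) (x : ℕ) (M : RTerm) (τ : SType),
      Has Γ (.abs x M) τ ↔
        ∃ (a : ITy) (σ : SType), τ = .arrow a σ ∧ Γ x = none ∧
          Has (extend Γ x a) M σ) ∧
    (∀ (Γ : Ctx) (M N : RTerm) (σ : SType),
      Has Γ (.app M N) σ ↔
        ∃ (Γ' : Ctx) (ts : List SType) (D0 : Ctx) (t0 : SType)
          (Ds : Fin ts.length → Ctx),
          Γ = ctxUnion Γ' (interFin D0 Ds) ∧
          ctxDisj Γ' (interFin D0 Ds) ∧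
          (∀ i, sameDom (Ds i) D0) ∧
          Has Γ' M (.arrow ts σ) ∧
          Has D0 N t0 ∧
          (∀ i : Fin ts.length, Has (Ds i) N (ts.get i))) ∧
    (∀ (Γ : Ctx) (z x y : ℕ) (M : RTerm) (σ : SType),
      Has Γ (.dup z x y M) σ ↔
        ∃ (Γ' : Ctx) (a b : ITy),
          Γ = extend Γ' z (a ++ b) ∧ x ≠ y ∧
          Γ' x = none ∧ Γ' y = none ∧ Γ' z = none ∧
          Has (extend (extend Γ' x a) y b) M σ) ∧
    (∀ (Γ : Ctx) (x : ℕ) (M : RTerm) (σ : SType),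
      Has Γ (.era x M) σ ↔
        ∃ Γ' : Ctx, Γ = extend Γ' x [] ∧ Γ' x = none ∧ Has Γ' M σ) := by
  refine ⟨?_, ?_, ?_, ?_⟩
  · intro Γ x M τ
    constructor
    · intro h
      cases h with
      | arrI hx hM => exact ⟨_, _, rfl, hx, hM⟩
    · rintro ⟨a, σ, rfl, hx, hM⟩
      exact Has.arrI hx hM
  · intro Γ M N σ
    constructor
    · intro h
      cases h with
      | arrE hM hN0 hNs hsd hdisj => exact ⟨_, _, _, _, _, rfl, hdisj, hsd, hM, hN0, hNs⟩
    · rintro ⟨Γ', ts, D0, t0, Ds, rfl, hdisj, hsd, hM, hN0, hNs⟩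
      exact Has.arrE hM hN0 hNs hsd hdisj
  · intro Γ z x y M σ
    constructor
    · intro h
      cases h with
      | cont hxy hx hy hz hM => exact ⟨_, _, _, rfl, hxy, hx, hy, hz, hM⟩
    · rintro ⟨Γ', a, b, rfl, hxy, hx, hy, hz, hM⟩
      exact Has.cont hxy hx hy hz hM
  · intro Γ x M σ
    constructor
    · intro h
      cases h with
      | thin hx hM => exact ⟨_, rfl, hx, hM⟩
    · rintro ⟨Γ', rfl, hx, hM⟩
      exact Has.thin hx hM

end RC
end

section
/- Every λ®-normal form is typeable in the intersection type system λ®∩. -/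
namespace RC

/-! ### Auxiliary development -/

/-- Structural size. -/
def size : RTerm → ℕ
  | .var _ => 1
  | .abs _ M => size M + 1
  | .app M N => size M + size N + 1
  | .era _ M => size M + 1
  | .dup _ _ _ M => size M + 1
  | .sub M _ N => size M + size N + 1

/-- All variable names occurring in a term. -/
def varsT : RTerm → Finset ℕ
  | .var x => {x}
  | .abs x M => insert x (varsT M)
  | .app M N => varsT M ∪ varsT N
  | .era x M => insert x (varsT M)
  | .dup x x₁ x₂ M => insert x (insert x₁ (insert x₂ (varsT M)))
  | .sub M x N => insert x (varsT M ∪ varsT N)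

lemma fv_subset_varsT : ∀ M, fv M ⊆ varsT M := by
  intro M
  induction M with
  | var x => simp [fv, varsT]
  | abs x M ih =>
      simp only [fv, varsT]
      exact (Finset.sdiff_subset).trans (ih.trans (Finset.subset_insert _ _))
  | app M N ihM ihN =>
      simp only [fv, varsT]
      exact Finset.union_subset_union ihM ihN
  | era x M ih =>
      simp only [fv, varsT]
      exact Finset.insert_subset_insert _ ih
  | dup x x₁ x₂ M ih =>
      simp only [fv, varsT]
      refine Finset.insert_subset_insert _ ?_
      exact (Finset.sdiff_subset).trans (ih.trans (by
        intro a ha; simp [Finset.mem_insert]; tauto))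
  | sub M x N ihM ihN =>
      simp only [fv, varsT]
      refine (Finset.union_subset ?_ ?_).trans (Finset.subset_insert _ _)
      · exact (Finset.sdiff_subset).trans (ihM.trans Finset.subset_union_left)
      · exact ihN.trans Finset.subset_union_right

lemma size_pos (M : RTerm) : 1 ≤ size M := by
  cases M <;> simp [size] <;> omega

/-- Iterated explicit substitution. -/
def subList (core : RTerm) : List (ℕ × RTerm) → RTerm
  | [] => core
  | p :: L => subList (.sub core p.1 p.2) L

@[simp] lemma subList_nil (M : RTerm) : subList M [] = M := rfl
@[simp] lemma subList_cons (M : RTerm) (p : ℕ × RTerm) (L : List (ℕ × RTerm)) :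
    subList M (p :: L) = subList (.sub M p.1 p.2) L := rfl

lemma subList_append (M : RTerm) (L₁ L₂ : List (ℕ × RTerm)) :
    subList M (L₁ ++ L₂) = subList (subList M L₁) L₂ := by
  induction L₁ generalizing M with
  | nil => rfl
  | cons p L ih => simp [ih]

/-- The left-hand side of a root substitution step is a `sub`. -/
lemma SubStep.isSub {M N : RTerm} (h : SubStep M N) :
    ∃ A x B, M = .sub A x B := by
  cases h <;> exact ⟨_, _, _, rfl⟩

lemma SStep.not_subFree {M N : RTerm} (h : SStep M N) : ¬ SubFree M := by
  induction h with
  | root h => obtain ⟨A, x, B, rfl⟩ := h.isSub; simp [SubFree]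
  | abs _ ih => exact ih
  | appL _ ih => intro hs; exact ih hs.1
  | appR _ ih => intro hs; exact ih hs.2
  | era _ ih => exact ih
  | dup _ ih => exact ih
  | subL _ _ => simp [SubFree]
  | subR _ _ => simp [SubFree]

lemma subFree_normal {M : RTerm} (h : SubFree M) : NormalS M :=
  fun _ hs => hs.not_subFree h

lemma subFree_eraList {M : RTerm} (h : SubFree M) : ∀ l, SubFree (eraList l M) := by
  intro l; induction l with
  | nil => exact h
  | cons x l ih => exact ih

lemma subFree_dupList {M : RTerm} (ρ₁ ρ₂ : ℕ → ℕ) (h : SubFree M) :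
    ∀ l, SubFree (dupList ρ₁ ρ₂ l M) := by
  intro l; induction l with
  | nil => exact h
  | cons x l ih => exact ih

lemma subFree_rename (ρ : ℕ → ℕ) : ∀ {M : RTerm}, SubFree M → SubFree (rename ρ M)
  | .var _, _ => trivial
  | .abs _ M, h => subFree_rename ρ (M := M) h
  | .app M N, h => ⟨subFree_rename ρ h.1, subFree_rename ρ h.2⟩
  | .era _ M, h => subFree_rename ρ (M := M) h
  | .dup _ _ _ M, h => subFree_rename ρ (M := M) h

lemma fv_rename_subset (ρ : ℕ → ℕ) : ∀ M, fv (rename ρ M) ⊆ (fv M).image ρ := by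
  intro M
  induction M with
  | var x => simp [fv, rename]
  | abs x M ih =>
      intro a ha
      simp only [rename, fv, Finset.mem_sdiff, Finset.mem_singleton] at ha
      obtain ⟨h1, h2⟩ := ha
      obtain ⟨y, hy, rfl⟩ := Finset.mem_image.1 (ih h1)
      exact Finset.mem_image.2 ⟨y, by simp [fv, hy]; rintro rfl; exact h2 rfl, rfl⟩
  | app M N ihM ihN =>
      intro a ha
      simp only [rename, fv, Finset.mem_union] at ha ⊢
      rcases ha with h | h
      · obtain ⟨y, hy, rfl⟩ := Finset.mem_image.1 (ihM h)
        exact Finset.mem_image.2 ⟨y, by simp [fv, hy], rfl⟩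
      · obtain ⟨y, hy, rfl⟩ := Finset.mem_image.1 (ihN h)
        exact Finset.mem_image.2 ⟨y, by simp [fv, hy], rfl⟩
  | era x M ih =>
      intro a ha
      simp only [rename, fv, Finset.mem_insert] at ha
      rcases ha with rfl | h
      · exact Finset.mem_image.2 ⟨x, by simp [fv], rfl⟩
      · obtain ⟨y, hy, rfl⟩ := Finset.mem_image.1 (ih h)
        exact Finset.mem_image.2 ⟨y, by simp [fv, hy], rfl⟩
  | dup x x₁ x₂ M ih =>
      intro a ha
      have he : fv (rename ρ (.dup x x₁ x₂ M))
          = insert (ρ x) (fv (rename ρ M) \ {ρ x₁, ρ x₂}) := rfl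
      rw [he, Finset.mem_insert, Finset.mem_sdiff] at ha
      rcases ha with rfl | ⟨h1, h2⟩
      · exact Finset.mem_image.2 ⟨x, by simp [fv], rfl⟩
      · obtain ⟨y, hy, rfl⟩ := Finset.mem_image.1 (ih h1)
        refine Finset.mem_image.2 ⟨y, ?_, rfl⟩
        show y ∈ insert x (fv M \ {x₁, x₂})
        rw [Finset.mem_insert, Finset.mem_sdiff]
        right; refine ⟨hy, fun hmem => ?_⟩
        rcases Finset.mem_insert.1 hmem with rfl | hmem
        · exact h2 (by simp)
        · rw [Finset.mem_singleton] at hmem; subst hmem; exact h2 (by simp)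
  | sub M x N ihM ihN =>
      intro a ha
      simp only [rename, fv, Finset.mem_union, Finset.mem_sdiff, Finset.mem_singleton] at ha
      rcases ha with ⟨h1, h2⟩ | h
      · obtain ⟨y, hy, rfl⟩ := Finset.mem_image.1 (ihM h1)
        refine Finset.mem_image.2 ⟨y, ?_, rfl⟩
        simp only [fv, Finset.mem_union, Finset.mem_sdiff, Finset.mem_singleton]
        exact Or.inl ⟨hy, by rintro rfl; exact h2 rfl⟩
      · obtain ⟨y, hy, rfl⟩ := Finset.mem_image.1 (ihN h)
        exact Finset.mem_image.2 ⟨y, by simp [fv, hy], rfl⟩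

lemma size_rename (ρ : ℕ → ℕ) : ∀ M, size (rename ρ M) = size M
  | .var _ => rfl
  | .abs _ M => by simp [rename, size, size_rename ρ M]
  | .app M N => by simp [rename, size, size_rename ρ M, size_rename ρ N]
  | .era _ M => by simp [rename, size, size_rename ρ M]
  | .dup _ _ _ M => by simp [rename, size, size_rename ρ M]
  | .sub M _ N => by simp [rename, size, size_rename ρ M, size_rename ρ N]

/-! ### SSteps congruences -/

lemma ssteps_abs (x : ℕ) {M M' : RTerm} (h : SSteps M M') :
    SSteps (.abs x M) (.abs x M') :=
  Relation.ReflTransGen.lift (fun T => RTerm.abs x T) (fun _ _ h => SStep.abs h) _ _ h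

lemma ssteps_appL (N : RTerm) {M M' : RTerm} (h : SSteps M M') :
    SSteps (.app M N) (.app M' N) :=
  Relation.ReflTransGen.lift (fun T => RTerm.app T N) (fun _ _ h => SStep.appL h) _ _ h

lemma ssteps_appR (M : RTerm) {N N' : RTerm} (h : SSteps N N') :
    SSteps (.app M N) (.app M N') :=
  Relation.ReflTransGen.lift (fun T => RTerm.app M T) (fun _ _ h => SStep.appR h) _ _ h

lemma ssteps_era (x : ℕ) {M M' : RTerm} (h : SSteps M M') :
    SSteps (.era x M) (.era x M') :=
  Relation.ReflTransGen.lift (fun T => RTerm.era x T) (fun _ _ h => SStep.era h) _ _ h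

lemma ssteps_dup (x x₁ x₂ : ℕ) {M M' : RTerm} (h : SSteps M M') :
    SSteps (.dup x x₁ x₂ M) (.dup x x₁ x₂ M') :=
  Relation.ReflTransGen.lift (fun T => RTerm.dup x x₁ x₂ T) (fun _ _ h => SStep.dup h) _ _ h

lemma sstep_subList {M M' : RTerm} (h : SStep M M') :
    ∀ (L : List (ℕ × RTerm)), SStep (subList M L) (subList M' L) := by
  intro L
  induction L generalizing M M' with
  | nil => exact h
  | cons p L ih => exact ih (SStep.subL h)

lemma ssteps_subList (L : List (ℕ × RTerm)) {M M' : RTerm} (h : SSteps M M') :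
    SSteps (subList M L) (subList M' L) :=
  Relation.ReflTransGen.lift (fun T => subList T L) (fun _ _ h => sstep_subList h L) _ _ h

lemma substep_subList {M M' : RTerm} (h : SubStep M M') (L : List (ℕ × RTerm)) :
    SSteps (subList M L) (subList M' L) :=
  Relation.ReflTransGen.single (sstep_subList (SStep.root h) L)

lemma ssteps_eraList (l : List ℕ) {M M' : RTerm} (h : SSteps M M') :
    SSteps (eraList l M) (eraList l M') := by
  induction l with
  | nil => exact h
  | cons x l ih => exact ssteps_era x ih

lemma ssteps_dupList (ρ₁ ρ₂ : ℕ → ℕ) (l : List ℕ) {M M' : RTerm} (h : SSteps M M') :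
    SSteps (dupList ρ₁ ρ₂ l M) (dupList ρ₁ ρ₂ l M') := by
  induction l with
  | nil => exact h
  | cons x l ih => exact ssteps_dup x (ρ₁ x) (ρ₂ x) ih

/-! ### Pushing constructors through substitution lists -/

lemma push_abs (y : ℕ) : ∀ (L : List (ℕ × RTerm)) (M : RTerm),
    (∀ p ∈ L, p.1 ≠ y) →
    SSteps (subList (.abs y M) L) (.abs y (subList M L)) := by
  intro L
  induction L with
  | nil => intro M _; exact Relation.ReflTransGen.refl
  | cons p L ih =>
      intro M hL
      refine (substep_subList (SubStep.abs (hL p (by simp))) L).trans ?_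
      exact ih (.sub M p.1 p.2) (fun q hq => hL q (by simp [hq]))

lemma push_era (y : ℕ) : ∀ (L : List (ℕ × RTerm)) (M : RTerm),
    (∀ p ∈ L, p.1 ≠ y) →
    SSteps (subList (.era y M) L) (.era y (subList M L)) := by
  intro L
  induction L with
  | nil => intro M _; exact Relation.ReflTransGen.refl
  | cons p L ih =>
      intro M hL
      refine (substep_subList (SubStep.eraNe (hL p (by simp))) L).trans ?_
      exact ih (.sub M p.1 p.2) (fun q hq => hL q (by simp [hq]))

lemma push_dup (y y₁ y₂ : ℕ) : ∀ (L : List (ℕ × RTerm)) (M : RTerm),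
    (∀ p ∈ L, p.1 ≠ y) →
    SSteps (subList (.dup y y₁ y₂ M) L) (.dup y y₁ y₂ (subList M L)) := by
  intro L
  induction L with
  | nil => intro M _; exact Relation.ReflTransGen.refl
  | cons p L ih =>
      intro M hL
      refine (substep_subList (SubStep.dupNe (hL p (by simp))) L).trans ?_
      exact ih (.sub M p.1 p.2) (fun q hq => hL q (by simp [hq]))

lemma push_eraList : ∀ (names : List ℕ) (L : List (ℕ × RTerm)) (M : RTerm),
    (∀ p ∈ L, p.1 ∉ names) →
    SSteps (subList (eraList names M) L) (eraList names (subList M L)) := by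
  intro names
  induction names with
  | nil => intro L M _; exact Relation.ReflTransGen.refl
  | cons x names ih =>
      intro L M hL
      show SSteps (subList (.era x (eraList names M)) L) _
      refine (push_era x L _ (fun p hp => by
        have := hL p hp; simp at this; exact this.1)).trans ?_
      exact ssteps_era x (ih L M (fun p hp => by
        have := hL p hp; simp at this; exact this.2))

lemma push_dupList (ρ₁ ρ₂ : ℕ → ℕ) : ∀ (names : List ℕ) (L : List (ℕ × RTerm)) (M : RTerm),
    (∀ p ∈ L, p.1 ∉ names) →
    SSteps (subList (dupList ρ₁ ρ₂ names M) L) (dupList ρ₁ ρ₂ names (subList M L)) := by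
  intro names
  induction names with
  | nil => intro L M _; exact Relation.ReflTransGen.refl
  | cons x names ih =>
      intro L M hL
      show SSteps (subList (.dup x (ρ₁ x) (ρ₂ x) (dupList ρ₁ ρ₂ names M)) L) _
      refine (push_dup x (ρ₁ x) (ρ₂ x) L _ (fun p hp => by
        have := hL p hp; simp at this; exact this.1)).trans ?_
      exact ssteps_dup x (ρ₁ x) (ρ₂ x) (ih L M (fun p hp => by
        have := hL p hp; simp at this; exact this.2))

lemma era_til_eq : ∀ (L₁ : List (ℕ × RTerm)) (y : ℕ) (N : RTerm) (L₂ : List (ℕ × RTerm))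
    (M : RTerm), (∀ q ∈ L₁, q.1 ≠ y) → (∀ q ∈ L₂, q.1 ∉ fvList N) →
    SSteps (subList (.era y M) (L₁ ++ (y, N) :: L₂))
      (eraList (fvList N) (subList M (L₁ ++ L₂))) := by
  intro L₁
  induction L₁ with
  | nil =>
      intro y N L₂ M _ h₂
      refine (substep_subList SubStep.eraEq L₂).trans ?_
      exact push_eraList (fvList N) L₂ M h₂
  | cons q L₁ ih =>
      intro y N L₂ M h₁ h₂
      refine (substep_subList (SubStep.eraNe (h₁ q (by simp))) (L₁ ++ (y, N) :: L₂)).trans ?_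
      exact ih y N L₂ (.sub M q.1 q.2) (fun r hr => h₁ r (by simp [hr])) h₂

lemma dup_til_eq : ∀ (L₁ : List (ℕ × RTerm)) (y y₁ y₂ : ℕ) (N : RTerm)
    (L₂ : List (ℕ × RTerm)) (M : RTerm) (ρ₁ ρ₂ : ℕ → ℕ),
    (∀ q ∈ L₁, q.1 ≠ y) → (∀ q ∈ L₂, q.1 ∉ fvList N) →
    Set.InjOn ρ₁ (fv N) → Set.InjOn ρ₂ (fv N) →
    (∀ v ∈ fv N, ρ₁ v ∉ fv (subList M L₁) ∪ fv N ∧ ρ₂ v ∉ fv (subList M L₁) ∪ fv N) →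
    (∀ v ∈ fv N, ∀ w ∈ fv N, ρ₁ v ≠ ρ₂ w) →
    SSteps (subList (.dup y y₁ y₂ M) (L₁ ++ (y, N) :: L₂))
      (dupList ρ₁ ρ₂ (fvList N)
        (subList M (L₁ ++ (y₁, rename ρ₁ N) :: (y₂, rename ρ₂ N) :: L₂))) := by
  intro L₁
  induction L₁ with
  | nil =>
      intro y y₁ y₂ N L₂ M ρ₁ ρ₂ _ h₂ hi₁ hi₂ hfr hne
      refine (substep_subList (SubStep.dupEq hi₁ hi₂ (fun v hv => hfr v hv) hne) L₂).trans ?_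
      exact push_dupList ρ₁ ρ₂ (fvList N) L₂ _ h₂
  | cons q L₁ ih =>
      intro y y₁ y₂ N L₂ M ρ₁ ρ₂ h₁ h₂ hi₁ hi₂ hfr hne
      refine (substep_subList (SubStep.dupNe (h₁ q (by simp)))
        (L₁ ++ (y, N) :: L₂)).trans ?_
      exact ih y y₁ y₂ N L₂ (.sub M q.1 q.2) ρ₁ ρ₂
        (fun r hr => h₁ r (by simp [hr])) h₂ hi₁ hi₂ hfr hne
/-! ### fv facts for subList -/

lemma mem_fv_subList {x : ℕ} : ∀ (L : List (ℕ × RTerm)) (M : RTerm),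
    x ∈ fv M → (∀ p ∈ L, p.1 ≠ x) → x ∈ fv (subList M L) := by
  intro L
  induction L with
  | nil => intro M h _; exact h
  | cons p L ih =>
      intro M h hne
      refine ih (.sub M p.1 p.2) ?_ (fun q hq => hne q (by simp [hq]))
      show x ∈ (fv M \ {p.1}) ∪ fv p.2
      rw [Finset.mem_union, Finset.mem_sdiff, Finset.mem_singleton]
      exact Or.inl ⟨h, fun hx => hne p (by simp) hx.symm⟩

lemma fv_subList_sub : ∀ (L : List (ℕ × RTerm)) (M : RTerm) (x : ℕ),
    x ∈ fv (subList M L) → x ∈ fv M ∨ ∃ p ∈ L, x ∈ fv p.2 := by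
  intro L
  induction L with
  | nil => intro M x h; exact Or.inl h
  | cons p L ih =>
      intro M x h
      rcases ih (.sub M p.1 p.2) x h with h' | ⟨q, hq, hx⟩
      · rw [show fv (RTerm.sub M p.1 p.2) = (fv M \ {p.1}) ∪ fv p.2 from rfl,
          Finset.mem_union, Finset.mem_sdiff] at h'
        rcases h' with ⟨h1, _⟩ | h2
        · exact Or.inl h1
        · exact Or.inr ⟨p, by simp, h2⟩
      · exact Or.inr ⟨q, by simp [hq], hx⟩

/-! ### Splitting an application -/

lemma push_app : ∀ (L : List (ℕ × RTerm)) (M P : RTerm),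
    (L.map Prod.fst).Nodup →
    (∀ p ∈ L, (p.1 ∈ fv M ∧ p.1 ∉ fv P) ∨ (p.1 ∉ fv M ∧ p.1 ∈ fv P)) →
    (∀ p ∈ L, ∀ q ∈ L, p ≠ q → p.1 ∉ fv q.2) →
    ∃ La Lb, L.Perm (La ++ Lb) ∧ (∀ p ∈ La, p.1 ∈ fv M) ∧ (∀ p ∈ Lb, p.1 ∈ fv P) ∧
      SSteps (subList (.app M P) L) (.app (subList M La) (subList P Lb)) := by
  intro L
  induction L with
  | nil =>
      intro M P _ _ _
      exact ⟨[], [], List.Perm.refl _, by simp, by simp, Relation.ReflTransGen.refl⟩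
  | cons p L ih =>
      intro M P hnd hmem hcross
      have hpL : p.1 ∉ L.map Prod.fst := by
        have := hnd; rw [List.map_cons, List.nodup_cons] at this; exact this.1
      have hndL : (L.map Prod.fst).Nodup := by
        have := hnd; rw [List.map_cons, List.nodup_cons] at this; exact this.2
      have hqnep : ∀ q ∈ L, q ≠ p := by
        intro q hq he; exact hpL (he ▸ (List.mem_map.2 ⟨q, hq, rfl⟩))
      have hqkey : ∀ q ∈ L, q.1 ≠ p.1 := by
        intro q hq he; exact hpL (he ▸ (List.mem_map.2 ⟨q, hq, rfl⟩))
      have hcrossL : ∀ q ∈ L, q.1 ∉ fv p.2 := by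
        intro q hq; exact hcross q (by simp [hq]) p (by simp) (hqnep q hq)
      rcases hmem p (by simp) with ⟨hM, hP⟩ | ⟨hM, hP⟩
      · -- goes to the left branch
        have step : SSteps (subList (.app M P) (p :: L))
            (subList (.app (.sub M p.1 p.2) P) L) :=
          substep_subList (SubStep.appL hM) L
        obtain ⟨La, Lb, hperm, hLa, hLb, hsteps⟩ := ih (.sub M p.1 p.2) P hndL
          (by
            intro q hq
            rcases hmem q (by simp [hq]) with ⟨h1, h2⟩ | ⟨h1, h2⟩
            · left
              refine ⟨?_, h2⟩
              show q.1 ∈ (fv M \ {p.1}) ∪ fv p.2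
              rw [Finset.mem_union, Finset.mem_sdiff, Finset.mem_singleton]
              exact Or.inl ⟨h1, hqkey q hq⟩
            · right
              refine ⟨?_, h2⟩
              show q.1 ∉ (fv M \ {p.1}) ∪ fv p.2
              rw [Finset.mem_union, Finset.mem_sdiff, Finset.mem_singleton]
              push_neg
              exact ⟨fun h => absurd h h1, hcrossL q hq⟩)
          (fun q hq r hr hne => hcross q (by simp [hq]) r (by simp [hr]) hne)
        refine ⟨p :: La, Lb, ?_, ?_, hLb, step.trans hsteps⟩
        · exact (hperm.cons p).trans (List.Perm.refl _)
        · intro q hq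
          rcases List.mem_cons.1 hq with rfl | hq'
          · exact hM
          · have hqL : q ∈ L := (hperm.mem_iff.2 (by simp [List.mem_append]; left; exact hq'))
            have := hLa q hq'
            rw [show fv (RTerm.sub M p.1 p.2) = (fv M \ {p.1}) ∪ fv p.2 from rfl,
              Finset.mem_union, Finset.mem_sdiff] at this
            rcases this with ⟨h1, _⟩ | h2
            · exact h1
            · exact absurd h2 (hcrossL q hqL)
      · -- goes to the right branch
        have step : SSteps (subList (.app M P) (p :: L))
            (subList (.app M (.sub P p.1 p.2)) L) :=
          substep_subList (SubStep.appR hP) L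
        obtain ⟨La, Lb, hperm, hLa, hLb, hsteps⟩ := ih M (.sub P p.1 p.2) hndL
          (by
            intro q hq
            rcases hmem q (by simp [hq]) with ⟨h1, h2⟩ | ⟨h1, h2⟩
            · left
              refine ⟨h1, ?_⟩
              show q.1 ∉ (fv P \ {p.1}) ∪ fv p.2
              rw [Finset.mem_union, Finset.mem_sdiff, Finset.mem_singleton]
              push_neg
              exact ⟨fun h => absurd h h2, hcrossL q hq⟩
            · right
              refine ⟨h1, ?_⟩
              show q.1 ∈ (fv P \ {p.1}) ∪ fv p.2
              rw [Finset.mem_union, Finset.mem_sdiff, Finset.mem_singleton]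
              exact Or.inl ⟨h2, hqkey q hq⟩)
          (fun q hq r hr hne => hcross q (by simp [hq]) r (by simp [hr]) hne)
        refine ⟨La, p :: Lb, ?_, hLa, ?_, step.trans hsteps⟩
        · exact ((hperm.cons p).trans List.perm_middle.symm)
        · intro q hq
          rcases List.mem_cons.1 hq with rfl | hq'
          · exact hP
          · have hqL : q ∈ L := (hperm.mem_iff.2 (by simp [List.mem_append]; right; exact hq'))
            have := hLb q hq'
            rw [show fv (RTerm.sub P p.1 p.2) = (fv P \ {p.1}) ∪ fv p.2 from rfl,
              Finset.mem_union, Finset.mem_sdiff] at this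
            rcases this with ⟨h1, _⟩ | h2
            · exact h1
            · exact absurd h2 (hcrossL q hqL)
/-! ### Choosing fresh renamings -/

lemma exists_fresh (S : Finset ℕ) :
    ∃ ρ₁ ρ₂ : ℕ → ℕ, Function.Injective ρ₁ ∧ Function.Injective ρ₂ ∧
      (∀ z, ρ₁ z ∉ S ∧ ρ₂ z ∉ S) ∧ (∀ y z, ρ₁ y ≠ ρ₂ z) := by
  classical
  set K := S.sup id + 1 with hK
  refine ⟨fun z => 2 * (z + K), fun z => 2 * (z + K) + 1, ?_, ?_, ?_, ?_⟩
  · intro a b h; have h' : 2 * (a + K) = 2 * (b + K) := h; omega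
  · intro a b h; have h' : 2 * (a + K) + 1 = 2 * (b + K) + 1 := h; omega
  · intro z
    constructor
    · intro hmem
      have h2 : 2 * (z + K) ∈ S := hmem
      have h3 := Finset.le_sup (f := id) h2
      simp only [id_eq] at h3; omega
    · intro hmem
      have h2 : 2 * (z + K) + 1 ∈ S := hmem
      have h3 := Finset.le_sup (f := id) h2
      simp only [id_eq] at h3; omega
  · intro y z h; have h' : 2 * (y + K) = 2 * (z + K) + 1 := h; omega

lemma fv_mem_fold : ∀ (L : List (ℕ × RTerm)) (q : ℕ × RTerm), q ∈ L →
    fv q.2 ⊆ L.foldr (fun p s => fv p.2 ∪ s) ∅ := by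
  intro L
  induction L with
  | nil => intro q hq; simp at hq
  | cons p L ih =>
      intro q hq
      rcases List.mem_cons.1 hq with rfl | hq'
      · exact Finset.subset_union_left
      · exact (ih q hq').trans Finset.subset_union_right

lemma varsT_abs_sub (y : ℕ) (M : RTerm) : varsT M ⊆ varsT (.abs y M) :=
  Finset.subset_insert _ _
lemma varsT_era_sub (y : ℕ) (M : RTerm) : varsT M ⊆ varsT (.era y M) :=
  Finset.subset_insert _ _
lemma varsT_appL_sub (M N : RTerm) : varsT M ⊆ varsT (.app M N) :=
  Finset.subset_union_left
lemma varsT_appR_sub (M N : RTerm) : varsT N ⊆ varsT (.app M N) :=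
  Finset.subset_union_right
lemma varsT_dup_sub (y y₁ y₂ : ℕ) (M : RTerm) : varsT M ⊆ varsT (.dup y y₁ y₂ M) :=
  (Finset.subset_insert _ _).trans ((Finset.subset_insert _ _).trans
    (Finset.subset_insert _ _))

lemma mem_varsT_dup₁ (y y₁ y₂ : ℕ) (M : RTerm) : y₁ ∈ varsT (.dup y y₁ y₂ M) := by
  simp [varsT]
lemma mem_varsT_dup₂ (y y₁ y₂ : ℕ) (M : RTerm) : y₂ ∈ varsT (.dup y y₁ y₂ M) := by
  simp [varsT]

lemma singleton_of_length_le_one {α : Type*} {L : List α} (h : L.length ≤ 1)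
    {p q : α} (hp : p ∈ L) (hq : q ∈ L) : p = q := by
  match L, h with
  | [], _ => simp at hp
  | [a], _ => simp at hp hq; rw [hp, hq]
/-! ### Weak normalisation of substitution evaluation -/

lemma wn : ∀ (n : ℕ) (core : RTerm) (L : List (ℕ × RTerm)),
    size core ≤ n → WF core → SubFree core →
    (∀ p ∈ L, SubFree p.2 ∧ p.1 ∈ fv core) →
    (L.map Prod.fst).Nodup →
    (L.length ≤ 1 ∨ ∀ p ∈ L, ∀ v ∈ fv p.2, v ∉ varsT core ∧ ∀ q ∈ L, v ≠ q.1) →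
    ∃ P, SubFree P ∧ SSteps (subList core L) P := by
  intro n
  induction n with
  | zero =>
      intro core L hs
      exact absurd hs (by have := size_pos core; omega)
  | succ n ih =>
    intro core L hsz hwf hsf hmem hnd hfr
    have hcross : ∀ p ∈ L, ∀ q ∈ L, p ≠ q → p.1 ∉ fv q.2 := by
      intro p hp q hq hne hin
      rcases hfr with h1 | h1
      · exact hne (singleton_of_length_le_one h1 hp hq)
      · exact (h1 q hq p.1 hin).2 p hp rfl
    cases core with
    | var y =>
        rcases L with _ | ⟨p, L⟩
        · exact ⟨.var y, trivial, Relation.ReflTransGen.refl⟩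
        rcases L with _ | ⟨q, L⟩
        · have hp : p.1 = y := by
            have := (hmem p (by simp)).2
            rwa [show fv (.var y) = {y} from rfl, Finset.mem_singleton] at this
          refine ⟨p.2, (hmem p (by simp)).1, ?_⟩
          show SSteps (.sub (.var y) p.1 p.2) p.2
          rw [← hp]
          exact Relation.ReflTransGen.single (SStep.root (SubStep.var p.1 p.2))
        · exfalso
          have hp : p.1 = y := by
            have := (hmem p (by simp)).2
            rwa [show fv (.var y) = {y} from rfl, Finset.mem_singleton] at this
          have hq : q.1 = y := by
            have := (hmem q (by simp)).2
            rwa [show fv (.var y) = {y} from rfl, Finset.mem_singleton] at this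
          rw [List.map_cons, List.nodup_cons] at hnd
          exact hnd.1 (by rw [hp, ← hq]; simp)
    | abs y M =>
        cases hwf with
        | abs hwfM hyfv =>
        have hkey : ∀ p ∈ L, p.1 ≠ y ∧ p.1 ∈ fv M := by
          intro p hp
          have h2 := (hmem p hp).2
          rw [show fv (.abs y M) = fv M \ {y} from rfl, Finset.mem_sdiff,
            Finset.mem_singleton] at h2
          exact ⟨h2.2, h2.1⟩
        obtain ⟨P', hP's, hP'⟩ := ih M L
          (by simp only [size] at hsz; omega) hwfM hsf
          (fun p hp => ⟨(hmem p hp).1, (hkey p hp).2⟩) hnd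
          (hfr.imp id fun h p hp v hv =>
            ⟨fun c => (h p hp v hv).1 (varsT_abs_sub y M c), (h p hp v hv).2⟩)
        exact ⟨.abs y P', hP's,
          (push_abs y L M (fun p hp => (hkey p hp).1)).trans (ssteps_abs y hP')⟩
    | app M P =>
        cases hwf with
        | app hwfM hwfP hdisj =>
        have hmem' : ∀ p ∈ L, (p.1 ∈ fv M ∧ p.1 ∉ fv P) ∨ (p.1 ∉ fv M ∧ p.1 ∈ fv P) := by
          intro p hp
          have h2 := (hmem p hp).2
          rw [show fv (.app M P) = fv M ∪ fv P from rfl, Finset.mem_union] at h2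
          by_cases hM : p.1 ∈ fv M
          · exact Or.inl ⟨hM, Finset.disjoint_left.1 hdisj hM⟩
          · exact Or.inr ⟨hM, h2.resolve_left hM⟩
        obtain ⟨La, Lb, hperm, hLa, hLb, hsteps⟩ := push_app L M P hnd hmem' hcross
        have hinLa : ∀ p ∈ La, p ∈ L := fun p hp =>
          hperm.mem_iff.2 (List.mem_append.2 (Or.inl hp))
        have hinLb : ∀ p ∈ Lb, p ∈ L := fun p hp =>
          hperm.mem_iff.2 (List.mem_append.2 (Or.inr hp))
        have hndab : (La.map Prod.fst).Nodup ∧ (Lb.map Prod.fst).Nodup := by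
          have h1 := (hperm.map Prod.fst).nodup hnd
          rw [List.map_append, List.nodup_append] at h1
          exact ⟨h1.1, h1.2.1⟩
        have hlen := hperm.length_eq
        rw [List.length_append] at hlen
        obtain ⟨P₁, hP₁s, hP₁⟩ := ih M La
          (by simp only [size] at hsz; omega) hwfM hsf.1
          (fun p hp => ⟨(hmem p (hinLa p hp)).1, hLa p hp⟩) hndab.1
          (hfr.imp (fun h => by omega) fun h p hp v hv =>
            ⟨fun c => (h p (hinLa p hp) v hv).1 (varsT_appL_sub M P c),
             fun q hq => (h p (hinLa p hp) v hv).2 q (hinLa q hq)⟩)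
        obtain ⟨P₂, hP₂s, hP₂⟩ := ih P Lb
          (by simp only [size] at hsz; omega) hwfP hsf.2
          (fun p hp => ⟨(hmem p (hinLb p hp)).1, hLb p hp⟩) hndab.2
          (hfr.imp (fun h => by omega) fun h p hp v hv =>
            ⟨fun c => (h p (hinLb p hp) v hv).1 (varsT_appR_sub M P c),
             fun q hq => (h p (hinLb p hp) v hv).2 q (hinLb q hq)⟩)
        exact ⟨.app P₁ P₂, ⟨hP₁s, hP₂s⟩,
          hsteps.trans ((ssteps_appL _ hP₁).trans (ssteps_appR _ hP₂))⟩
    | era y M =>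
        cases hwf with
        | era hwfM hynot =>
        by_cases hy : ∃ p ∈ L, p.1 = y
        · obtain ⟨p, hpL, hpy⟩ := hy
          obtain ⟨py, N⟩ := p
          dsimp only at hpy
          have hpy' : y = py := hpy.symm
          subst hpy'
          obtain ⟨L₁, L₂, rfl⟩ := List.append_of_mem hpL
          have hsfN := (hmem _ hpL).1
          have hmap : ((L₁ ++ (y, N) :: L₂).map Prod.fst)
              = L₁.map Prod.fst ++ y :: L₂.map Prod.fst := by simp
          have hnm := List.nodup_middle.1 (hmap ▸ hnd)
          rw [List.nodup_cons] at hnm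
          have hyn : y ∉ L₁.map Prod.fst ++ L₂.map Prod.fst := hnm.1
          have hnd' : ((L₁ ++ L₂).map Prod.fst).Nodup := by
            rw [List.map_append]; exact hnm.2
          have h₁ : ∀ q ∈ L₁, q.1 ≠ y := by
            intro q hq he
            exact hyn (List.mem_append.2 (Or.inl (he ▸ List.mem_map.2 ⟨q, hq, rfl⟩)))
          have h₂y : ∀ q ∈ L₂, q.1 ≠ y := by
            intro q hq he
            exact hyn (List.mem_append.2 (Or.inr (he ▸ List.mem_map.2 ⟨q, hq, rfl⟩)))
          have h₂fv : ∀ q ∈ L₂, q.1 ∉ fvList N := by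
            intro q hq hqin
            rw [fvList, Finset.mem_sort] at hqin
            rcases hfr with h1 | h1
            · have : q ∈ (L₁ ++ (y, N) :: L₂) := by simp [hq]
              have heq := singleton_of_length_le_one h1 this hpL
              subst heq
              exact h₂y _ hq rfl
            · exact (h1 _ hpL q.1 hqin).2 q (by simp [hq]) rfl
          have hmemM : ∀ q ∈ L₁ ++ L₂, q.1 ∈ fv M := by
            intro q hq
            have hqL : q ∈ (L₁ ++ (y, N) :: L₂) := by
              rcases List.mem_append.1 hq with h | h
              · simp [h]
              · simp [h]
            have h2 := (hmem q hqL).2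
            rw [show fv (.era y M) = insert y (fv M) from rfl, Finset.mem_insert] at h2
            rcases h2 with he | h2
            · exfalso
              rcases List.mem_append.1 hq with h | h
              · exact h₁ q h he
              · exact h₂y q h he
            · exact h2
          obtain ⟨P', hP's, hP'⟩ := ih M (L₁ ++ L₂)
            (by simp only [size] at hsz; omega) hwfM hsf
            (fun q hq => ⟨(hmem q (by
              rcases List.mem_append.1 hq with h | h
              · simp [h]
              · simp [h])).1, hmemM q hq⟩) hnd'
            (by
              rcases hfr with h1 | h1
              · left
                rw [List.length_append] at h1 ⊢
                simp only [List.length_cons] at h1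
                omega
              · right
                intro q hq v hv
                have hqL : q ∈ (L₁ ++ (y, N) :: L₂) := by
                  rcases List.mem_append.1 hq with h | h
                  · simp [h]
                  · simp [h]
                refine ⟨fun c => (h1 q hqL v hv).1 (varsT_era_sub y M c), ?_⟩
                intro r hr
                exact (h1 q hqL v hv).2 r (by
                  rcases List.mem_append.1 hr with h | h
                  · simp [h]
                  · simp [h]))
          refine ⟨eraList (fvList N) P', subFree_eraList hP's _, ?_⟩
          exact (era_til_eq L₁ y N L₂ M h₁ h₂fv).trans (ssteps_eraList _ hP')
        · have hkey : ∀ p ∈ L, p.1 ≠ y ∧ p.1 ∈ fv M := by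
            intro p hp
            have h2 := (hmem p hp).2
            rw [show fv (.era y M) = insert y (fv M) from rfl, Finset.mem_insert] at h2
            have hne : p.1 ≠ y := fun he => hy ⟨p, hp, he⟩
            exact ⟨hne, h2.resolve_left hne⟩
          obtain ⟨P', hP's, hP'⟩ := ih M L
            (by simp only [size] at hsz; omega) hwfM hsf
            (fun p hp => ⟨(hmem p hp).1, (hkey p hp).2⟩) hnd
            (hfr.imp id fun h p hp v hv =>
              ⟨fun c => (h p hp v hv).1 (varsT_era_sub y M c), (h p hp v hv).2⟩)
          exact ⟨.era y P', hP's,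
            (push_era y L M (fun p hp => (hkey p hp).1)).trans (ssteps_era y hP')⟩
    | dup y y₁ y₂ M =>
        cases hwf with
        | dup hwfM hy₁ hy₂ hne12 hynot =>
        by_cases hy : ∃ p ∈ L, p.1 = y
        · obtain ⟨p, hpL, hpy⟩ := hy
          obtain ⟨py, N⟩ := p
          dsimp only at hpy
          have hpy' : y = py := hpy.symm
          subst hpy'
          obtain ⟨L₁, L₂, rfl⟩ := List.append_of_mem hpL
          have hsfN := (hmem _ hpL).1
          have hmap : ((L₁ ++ (y, N) :: L₂).map Prod.fst)
              = L₁.map Prod.fst ++ y :: L₂.map Prod.fst := by simp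
          have hnm := List.nodup_middle.1 (hmap ▸ hnd)
          rw [List.nodup_cons] at hnm
          have hyn : y ∉ L₁.map Prod.fst ++ L₂.map Prod.fst := hnm.1
          have hndold := hnm.2
          rw [List.nodup_append] at hndold
          have h₁ : ∀ q ∈ L₁, q.1 ≠ y := by
            intro q hq he
            exact hyn (List.mem_append.2 (Or.inl (he ▸ List.mem_map.2 ⟨q, hq, rfl⟩)))
          have h₂y : ∀ q ∈ L₂, q.1 ≠ y := by
            intro q hq he
            exact hyn (List.mem_append.2 (Or.inr (he ▸ List.mem_map.2 ⟨q, hq, rfl⟩)))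
          have h₂fv : ∀ q ∈ L₂, q.1 ∉ fvList N := by
            intro q hq hqin
            rw [fvList, Finset.mem_sort] at hqin
            rcases hfr with h1 | h1
            · have hql : q ∈ (L₁ ++ (y, N) :: L₂) := by simp [hq]
              have heq := singleton_of_length_le_one h1 hql hpL
              subst heq
              exact h₂y _ hq rfl
            · exact (h1 _ hpL q.1 hqin).2 q (by simp [hq]) rfl
          have hkeysM : ∀ q ∈ L₁ ++ L₂, q.1 ∈ fv M ∧ q.1 ≠ y₁ ∧ q.1 ≠ y₂ := by
            intro q hq
            have hqL : q ∈ (L₁ ++ (y, N) :: L₂) := by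
              rcases List.mem_append.1 hq with h | h
              · simp [h]
              · simp [h]
            have h2 := (hmem q hqL).2
            rw [show fv (.dup y y₁ y₂ M) = insert y (fv M \ {y₁, y₂}) from rfl,
              Finset.mem_insert] at h2
            have hqy : q.1 ≠ y := by
              rcases List.mem_append.1 hq with h | h
              · exact h₁ q h
              · exact h₂y q h
            have h3 := h2.resolve_left hqy
            rw [Finset.mem_sdiff] at h3
            refine ⟨h3.1, ?_, ?_⟩ <;> intro he <;> exact h3.2 (by simp [he])
          set S : Finset ℕ := varsT M ∪ fv N ∪
            ((L₁ ++ (y, N) :: L₂).foldr (fun p s => fv p.2 ∪ s) ∅) ∪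
            (((L₁ ++ (y, N) :: L₂).map Prod.fst).toFinset) ∪ {y, y₁, y₂} with hS
          obtain ⟨ρ₁, ρ₂, hinj₁, hinj₂, himg, hρne⟩ := exists_fresh S
          have hvarsS : varsT M ⊆ S := by
            intro a ha; rw [hS]; simp [ha]
          have hfvNS : fv N ⊆ S := by
            intro a ha; rw [hS]; simp [ha]
          have hfoldS : ∀ q ∈ (L₁ ++ (y, N) :: L₂), ∀ w ∈ fv q.2, w ∈ S := by
            intro q hq w hw
            have := fv_mem_fold _ q hq hw
            rw [hS]; simp only [Finset.mem_union]; left; left; right; exact this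
          have hkeysS : ∀ q ∈ (L₁ ++ (y, N) :: L₂), q.1 ∈ S := by
            intro q hq
            rw [hS]
            simp only [Finset.mem_union]
            left; right
            rw [List.mem_toFinset]
            exact List.mem_map.2 ⟨q, hq, rfl⟩
          have hy₁S : y₁ ∈ S := by rw [hS]; simp
          have hy₂S : y₂ ∈ S := by rw [hS]; simp
          have hfr2 : ∀ v ∈ fv N, ρ₁ v ∉ fv (subList M L₁) ∪ fv N ∧
              ρ₂ v ∉ fv (subList M L₁) ∪ fv N := by
            intro v hv
            have hsub : ∀ w, w ∈ fv (subList M L₁) ∪ fv N → w ∈ S := by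
              intro w hw
              rw [Finset.mem_union] at hw
              rcases hw with hw | hw
              · rcases fv_subList_sub L₁ M w hw with h | ⟨q, hq, hwq⟩
                · exact hvarsS (fv_subset_varsT M h)
                · exact hfoldS q (by simp [hq]) w hwq
              · exact hfvNS hw
            exact ⟨fun c => (himg v).1 (hsub _ c), fun c => (himg v).2 (hsub _ c)⟩
          have steps1 := dup_til_eq L₁ y y₁ y₂ N L₂ M ρ₁ ρ₂ h₁ h₂fv
            (hinj₁.injOn) (hinj₂.injOn) hfr2 (fun v _ w _ => hρne v w)
          have hfvA : ∀ v ∈ fv (rename ρ₁ N), v ∉ S := by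
            intro v hv
            obtain ⟨w, _, rfl⟩ := Finset.mem_image.1 (fv_rename_subset ρ₁ N hv)
            exact (himg w).1
          have hfvB : ∀ v ∈ fv (rename ρ₂ N), v ∉ S := by
            intro v hv
            obtain ⟨w, _, rfl⟩ := Finset.mem_image.1 (fv_rename_subset ρ₂ N hv)
            exact (himg w).2
          have hLLe : (L₁ ++ (y, N) :: L₂).length ≤ 1 → L₁ = [] ∧ L₂ = [] := by
            intro h
            rw [List.length_append, List.length_cons] at h
            have h₁' : L₁.length = 0 := by omega
            have h₂' : L₂.length = 0 := by omega
            exact ⟨List.length_eq_zero_iff.1 h₁', List.length_eq_zero_iff.1 h₂'⟩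
          obtain ⟨P', hP's, hP'⟩ := ih M (L₁ ++ (y₁, rename ρ₁ N) :: (y₂, rename ρ₂ N) :: L₂)
            (by simp only [size] at hsz; omega) hwfM hsf
            (by
              intro q hq
              rcases List.mem_append.1 hq with h | h
              · exact ⟨(hmem q (by simp [h])).1, (hkeysM q (by simp [h])).1⟩
              · rcases List.mem_cons.1 h with rfl | h
                · exact ⟨subFree_rename ρ₁ hsfN, hy₁⟩
                · rcases List.mem_cons.1 h with rfl | h
                  · exact ⟨subFree_rename ρ₂ hsfN, hy₂⟩
                  · exact ⟨(hmem q (by simp [h])).1, (hkeysM q (by simp [h])).1⟩)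
            (by
              rw [List.map_append, List.map_cons, List.map_cons]
              rw [List.nodup_append]
              refine ⟨hndold.1, ?_, ?_⟩
              · rw [List.nodup_cons, List.nodup_cons]
                refine ⟨?_, ?_, hndold.2.1⟩
                · intro hc
                  rcases List.mem_cons.1 hc with he | hc
                  · exact hne12 he
                  · obtain ⟨q, hq, hqe⟩ := List.mem_map.1 hc
                    exact (hkeysM q (by simp [hq])).2.1 hqe
                · intro hc
                  obtain ⟨q, hq, hqe⟩ := List.mem_map.1 hc
                  exact absurd hqe (hkeysM q (by simp [hq])).2.2
              · intro a ha b hc hab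
                subst hab
                obtain ⟨q, hq, rfl⟩ := List.mem_map.1 ha
                rcases List.mem_cons.1 hc with he | hc
                · exact (hkeysM q (by simp [hq])).2.1 he
                · rcases List.mem_cons.1 hc with he | hc
                  · exact (hkeysM q (by simp [hq])).2.2 he
                  · exact hndold.2.2 _ ha _ hc rfl)
            (by
              right
              intro q hq v hv
              rcases List.mem_append.1 hq with hqo | hqc
              · -- old element from L₁
                rcases hfr with h1 | h1
                · rcases hLLe h1 with ⟨he, _⟩; rw [he] at hqo; simp at hqo
                · have hstr := h1 q (by simp [hqo]) v hv
                  refine ⟨fun c => hstr.1 (varsT_dup_sub y y₁ y₂ M c), ?_⟩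
                  intro r hr
                  rcases List.mem_append.1 hr with hro | hrc
                  · exact hstr.2 r (by simp [hro])
                  · rcases List.mem_cons.1 hrc with rfl | hrc
                    · intro he; exact hstr.1 (he ▸ mem_varsT_dup₁ y y₁ y₂ M)
                    · rcases List.mem_cons.1 hrc with rfl | hrc
                      · intro he; exact hstr.1 (he ▸ mem_varsT_dup₂ y y₁ y₂ M)
                      · exact hstr.2 r (by simp [hrc])
              · rcases List.mem_cons.1 hqc with rfl | hqc
                · -- new element (y₁, rename ρ₁ N)
                  have hvS : v ∉ S := hfvA v hv
                  refine ⟨fun c => hvS (hvarsS c), ?_⟩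
                  intro r hr
                  rcases List.mem_append.1 hr with hro | hrc
                  · intro he; exact hvS (he ▸ hkeysS r (by simp [hro]))
                  · rcases List.mem_cons.1 hrc with rfl | hrc
                    · intro he; exact hvS (he ▸ hy₁S)
                    · rcases List.mem_cons.1 hrc with rfl | hrc
                      · intro he; exact hvS (he ▸ hy₂S)
                      · intro he; exact hvS (he ▸ hkeysS r (by simp [hrc]))
                · rcases List.mem_cons.1 hqc with rfl | hqc
                  · -- new element (y₂, rename ρ₂ N)
                    have hvS : v ∉ S := hfvB v hv
                    refine ⟨fun c => hvS (hvarsS c), ?_⟩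
                    intro r hr
                    rcases List.mem_append.1 hr with hro | hrc
                    · intro he; exact hvS (he ▸ hkeysS r (by simp [hro]))
                    · rcases List.mem_cons.1 hrc with rfl | hrc
                      · intro he; exact hvS (he ▸ hy₁S)
                      · rcases List.mem_cons.1 hrc with rfl | hrc
                        · intro he; exact hvS (he ▸ hy₂S)
                        · intro he; exact hvS (he ▸ hkeysS r (by simp [hrc]))
                  · -- old element from L₂
                    rcases hfr with h1 | h1
                    · rcases hLLe h1 with ⟨_, he⟩; rw [he] at hqc; simp at hqc
                    · have hstr := h1 q (by simp [hqc]) v hv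
                      refine ⟨fun c => hstr.1 (varsT_dup_sub y y₁ y₂ M c), ?_⟩
                      intro r hr
                      rcases List.mem_append.1 hr with hro | hrc
                      · exact hstr.2 r (by simp [hro])
                      · rcases List.mem_cons.1 hrc with rfl | hrc
                        · intro he; exact hstr.1 (he ▸ mem_varsT_dup₁ y y₁ y₂ M)
                        · rcases List.mem_cons.1 hrc with rfl | hrc
                          · intro he; exact hstr.1 (he ▸ mem_varsT_dup₂ y y₁ y₂ M)
                          · exact hstr.2 r (by simp [hrc]))
          exact ⟨dupList ρ₁ ρ₂ (fvList N) P', subFree_dupList ρ₁ ρ₂ hP's _,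
            steps1.trans (ssteps_dupList ρ₁ ρ₂ (fvList N) hP')⟩
        · have hkey : ∀ p ∈ L, p.1 ≠ y ∧ p.1 ∈ fv M := by
            intro p hp
            have h2 := (hmem p hp).2
            rw [show fv (.dup y y₁ y₂ M) = insert y (fv M \ {y₁, y₂}) from rfl,
              Finset.mem_insert] at h2
            have hne : p.1 ≠ y := fun he => hy ⟨p, hp, he⟩
            exact ⟨hne, (Finset.mem_sdiff.1 (h2.resolve_left hne)).1⟩
          obtain ⟨P', hP's, hP'⟩ := ih M L
            (by simp only [size] at hsz; omega) hwfM hsf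
            (fun p hp => ⟨(hmem p hp).1, (hkey p hp).2⟩) hnd
            (hfr.imp id fun h p hp v hv =>
              ⟨fun c => (h p hp v hv).1 (varsT_dup_sub y y₁ y₂ M c), (h p hp v hv).2⟩)
          exact ⟨.dup y y₁ y₂ P', hP's,
            (push_dup y y₁ y₂ L M (fun p hp => (hkey p hp).1)).trans
              (ssteps_dup y y₁ y₂ hP')⟩
    | sub A x B => exact absurd hsf (by simp [SubFree])
/-! ### Existence of substitution normal forms -/

lemma exists_nf_sub {M N : RTerm} {x : ℕ} (hwf : WF M) (hsf : SubFree M)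
    (hx : x ∈ fv M) (hsfN : SubFree N) :
    ∃ P, SSteps (.sub M x N) P ∧ NormalS P := by
  obtain ⟨P, hPs, hsteps⟩ := wn (size M) M [(x, N)] le_rfl hwf hsf
    (by intro p hp; rw [List.mem_singleton] at hp; subst hp; exact ⟨hsfN, hx⟩)
    (by simp) (Or.inl (by simp))
  exact ⟨P, hsteps, subFree_normal hPs⟩

/-! ### Domains of bases -/

lemma ctxInter_none {Γ Δ : Ctx} {x : ℕ} :
    ctxInter Γ Δ x = none ↔ Γ x = none ∨ Δ x = none := by
  unfold ctxInter
  cases Γ x <;> cases Δ x <;> simp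

lemma foldl_ctxInter_none : ∀ (l : List Ctx) (C : Ctx) (x : ℕ),
    (l.foldl ctxInter C) x = none ↔ C x = none ∨ ∃ D ∈ l, D x = none := by
  intro l
  induction l with
  | nil => intro C x; simp
  | cons D l ih =>
      intro C x
      rw [List.foldl_cons, ih, ctxInter_none]
      constructor
      · rintro ((h | h) | ⟨E, hE, h⟩)
        · exact Or.inl h
        · exact Or.inr ⟨D, by simp, h⟩
        · exact Or.inr ⟨E, by simp [hE], h⟩
      · rintro (h | ⟨E, hE, h⟩)
        · exact Or.inl (Or.inl h)
        · rcases List.mem_cons.1 hE with rfl | hE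
          · exact Or.inl (Or.inr h)
          · exact Or.inr ⟨E, hE, h⟩

lemma topify_none {Γ : Ctx} {x : ℕ} : topify Γ x = none ↔ Γ x = none := by
  unfold topify; cases Γ x <;> simp

lemma interFin_none {D0 : Ctx} {n : ℕ} {Ds : Fin n → Ctx} {x : ℕ}
    (hsd : ∀ i, sameDom (Ds i) D0) :
    interFin D0 Ds x = none ↔ D0 x = none := by
  unfold interFin
  rw [foldl_ctxInter_none]
  constructor
  · rintro (h | ⟨D, hD, h⟩)
    · exact topify_none.1 h
    · obtain ⟨i, rfl⟩ := List.mem_ofFn.1 hD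
      exact (hsd i x).1 h
  · intro h
    exact Or.inl (topify_none.2 h)

lemma ctxUnion_none {Γ Δ : Ctx} {x : ℕ} :
    ctxUnion Γ Δ x = none ↔ Δ x = none ∧ Γ x = none := by
  unfold ctxUnion; cases Δ x <;> simp [Option.orElse]

/-- In `λ®∩`, the domain of the basis is exactly the set of free variables. -/
lemma has_dom {Γ : Ctx} {M : RTerm} {σ : SType} (h : Has Γ M σ) :
    ∀ y, Γ y = none ↔ y ∉ fv M := by
  induction h with
  | ax x σ =>
      intro y
      by_cases h : y = x
      · subst h; simp [extend, fv]
      · simp [extend, emptyCtx, fv, h]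
  | arrI hx hM ih =>
      rename_i Γ x a M σ
      intro y
      by_cases h : y = x
      · subst h; simp [fv, hx]
      · have h2 := ih y
        rw [show extend Γ x a y = Γ y from by simp [extend, h]] at h2
        rw [h2, show fv (.abs x M) = fv M \ {x} from rfl]
        simp [Finset.mem_sdiff, h]
  | arrE hM hN0 hNs hsd hdisj ihM ihN0 ihNs =>
      rename_i Γ M N σ ts D0 t0 Ds
      intro y
      rw [ctxUnion_none, interFin_none hsd, ihN0 y, ihM y,
        show fv (.app M N) = fv M ∪ fv N from rfl]
      rw [Finset.mem_union]
      tauto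
  | cont hxy hΓx hΓy hΓz hM ih =>
      rename_i Γ x y z a b M σ
      intro w
      by_cases hwz : w = z
      · subst hwz; simp [extend, fv]
      · rw [show extend Γ z (a ++ b) w = Γ w from by simp [extend, hwz],
          show fv (.dup z x y M) = insert z (fv M \ {x, y}) from rfl]
        by_cases hwx : w = x
        · subst hwx
          simp only [Finset.mem_insert, Finset.mem_sdiff, Finset.mem_singleton]
          constructor
          · intro _ hc
            rcases hc with hc | hc
            · exact hwz hc
            · exact hc.2 (by simp)
          · intro _; exact hΓx
        · by_cases hwy : w = y
          · subst hwy
            simp only [Finset.mem_insert, Finset.mem_sdiff, Finset.mem_singleton]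
            constructor
            · intro _ hc
              rcases hc with hc | hc
              · exact hwz hc
              · exact hc.2 (by simp)
            · intro _; exact hΓy
          · have h2 := ih w
            rw [show extend (extend Γ x a) y b w = Γ w from by
              simp [extend, hwx, hwy]] at h2
            rw [h2]
            simp only [Finset.mem_insert, Finset.mem_sdiff, Finset.mem_insert,
              Finset.mem_singleton]
            constructor
            · intro hnm hc
              rcases hc with hc | hc
              · exact hwz hc
              · exact hnm hc.1
            · intro hc hm
              exact hc (Or.inr ⟨hm, by tauto⟩)
  | thin hx hM ih =>
      rename_i Γ x M σ
      intro y
      by_cases h : y = x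
      · subst h; simp [extend, fv]
      · rw [show extend Γ x [] y = Γ y from by simp [extend, h], ih y,
          show fv (.era x M) = insert x (fv M) from rfl]
        simp [Finset.mem_insert, h]
/-! ### Reduction congruences and normal subterms -/

lemma red_of_cstep {M N : RTerm} (h : CStep M N) : Red M N :=
  ⟨M, N, SEquiv.refl M, h, SEquiv.refl N⟩

lemma red_abs {x : ℕ} {M N : RTerm} : Red M N → Red (.abs x M) (.abs x N) :=
  fun ⟨M', N', h1, h2, h3⟩ => ⟨_, _, SEquiv.abs h1, CStep.abs h2, SEquiv.abs h3⟩

lemma red_appL {P : RTerm} {M N : RTerm} : Red M N → Red (.app M P) (.app N P) :=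
  fun ⟨M', N', h1, h2, h3⟩ => ⟨_, _, SEquiv.appL h1, CStep.appL h2, SEquiv.appL h3⟩

lemma red_appR {P : RTerm} {M N : RTerm} : Red M N → Red (.app P M) (.app P N) :=
  fun ⟨M', N', h1, h2, h3⟩ => ⟨_, _, SEquiv.appR h1, CStep.appR h2, SEquiv.appR h3⟩

lemma red_era {x : ℕ} {M N : RTerm} : Red M N → Red (.era x M) (.era x N) :=
  fun ⟨M', N', h1, h2, h3⟩ => ⟨_, _, SEquiv.era h1, CStep.era h2, SEquiv.era h3⟩

lemma red_dup {x x₁ x₂ : ℕ} {M N : RTerm} :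
    Red M N → Red (.dup x x₁ x₂ M) (.dup x x₁ x₂ N) :=
  fun ⟨M', N', h1, h2, h3⟩ => ⟨_, _, SEquiv.dup h1, CStep.dup h2, SEquiv.dup h3⟩

/-! ### Packaging the (Cont) rule -/

lemma cont_pack {Γ' : Ctx} {K : RTerm} {σ : SType} {z x₁ x₂ : ℕ}
    (hK : Has Γ' K σ) (hne : x₁ ≠ x₂) (h1 : x₁ ∈ fv K) (h2 : x₂ ∈ fv K)
    (hz : z ∉ fv K \ ({x₁, x₂} : Finset ℕ)) :
    ∃ Γ, Has Γ (.dup z x₁ x₂ K) σ := by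
  have hd := has_dom hK
  obtain ⟨a, ha⟩ := Option.ne_none_iff_exists'.1 (fun c => ((hd x₁).1 c) h1)
  obtain ⟨b, hb⟩ := Option.ne_none_iff_exists'.1 (fun c => ((hd x₂).1 c) h2)
  set Γ : Ctx := fun w => if w = x₁ then none else if w = x₂ then none else Γ' w with hΓ
  have hext : extend (extend Γ x₁ a) x₂ b = Γ' := by
    funext w
    by_cases hw2 : w = x₂
    · subst hw2; simp [extend, hb.symm]
    · by_cases hw1 : w = x₁
      · subst hw1; simp [extend, hw2, ha.symm]
      · simp [extend, hw1, hw2, hΓ]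
  have hΓz : Γ z = none := by
    by_cases hz1 : z = x₁
    · simp [hΓ, hz1]
    · by_cases hz2 : z = x₂
      · simp [hΓ, hz1, hz2]
      · have : z ∉ fv K := by
          intro hc
          exact hz (Finset.mem_sdiff.2 ⟨hc, by simp [hz1, hz2]⟩)
        simp only [hΓ, if_neg hz1, if_neg hz2]
        exact (hd z).2 this
  refine ⟨extend Γ z (a ++ b), Has.cont hne ?_ ?_ hΓz (hext ▸ hK)⟩
  · simp [hΓ]
  · simp [hΓ, hne.symm]

/-! ### Main induction: normal forms are typeable -/

lemma typeable_main : ∀ (n : ℕ) (M : RTerm), size M ≤ n → WF M → SubFree M →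
    (∀ N, ¬ Red M N) →
    (∃ Γ σ, Has Γ M σ) ∧
      (∀ σ, (∀ x K, M ≠ .abs x K) → (∀ x K, M ≠ .era x K) → ∃ Γ, Has Γ M σ) := by
  intro n
  induction n with
  | zero =>
      intro M hs
      exact absurd hs (by have := size_pos M; omega)
  | succ n ih =>
    intro M hsz hwf hsf hnf
    cases M with
    | var x =>
        refine ⟨⟨_, .atom 0, Has.ax x (.atom 0)⟩, ?_⟩
        intro σ _ _
        exact ⟨_, Has.ax x σ⟩
    | abs x K =>
        cases hwf with
        | abs hwfK hxK =>
        have hnfK : ∀ N, ¬ Red K N := fun N hN => hnf _ (red_abs hN)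
        obtain ⟨⟨Γ', σ', hK⟩, -⟩ := ih K (by simp only [size] at hsz; omega)
          hwfK hsf hnfK
        have hd := has_dom hK
        obtain ⟨a, ha⟩ := Option.ne_none_iff_exists'.1 (fun c => ((hd x).1 c) hxK)
        set Γ : Ctx := fun w => if w = x then none else Γ' w with hΓ
        have hext : extend Γ x a = Γ' := by
          funext w
          by_cases hw : w = x
          · subst hw; simp [extend, ha.symm]
          · simp [extend, hw, hΓ]
        refine ⟨⟨Γ, .arrow a σ', Has.arrI (by simp [hΓ]) (hext ▸ hK)⟩, ?_⟩
        intro σ hne _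
        exact absurd rfl (hne x K)
    | app M₁ M₂ =>
        cases hwf with
        | app hwfM₁ hwfM₂ hdisj =>
        have hnf₁ : ∀ N, ¬ Red M₁ N := fun N hN => hnf _ (red_appL hN)
        have hnf₂ : ∀ N, ¬ Red M₂ N := fun N hN => hnf _ (red_appR hN)
        have hB : ∀ σ, ∃ Γ, Has Γ (.app M₁ M₂) σ := by
          intro σ
          -- M₁ is not an abstraction
          have hnabs : ∀ y K, M₁ ≠ .abs y K := by
            rintro y K rfl
            cases hwfM₁ with
            | abs hwfK hyK =>
            obtain ⟨P, hst, hnm⟩ := exists_nf_sub hwfK hsf.1 hyK hsf.2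
            exact hnf P (red_of_cstep (CStep.root (HeadStep.beta hst hnm)))
          have hnera : ∀ y K, M₁ ≠ .era y K := by
            rintro y K rfl
            exact hnf _ (red_of_cstep (CStep.root HeadStep.omega2))
          obtain ⟨-, hB₁⟩ := ih M₁ (by simp only [size] at hsz; omega)
            hwfM₁ hsf.1 hnf₁
          obtain ⟨⟨D0, t0, hD0⟩, -⟩ := ih M₂ (by simp only [size] at hsz; omega)
            hwfM₂ hsf.2 hnf₂
          obtain ⟨Γ, hΓ⟩ := hB₁ (.arrow [] σ) hnabs hnera
          have hsd : ∀ i : Fin ([] : List SType).length,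
              sameDom ((fun i : Fin ([] : List SType).length => i.elim0) i) D0 :=
            fun i => i.elim0
          refine ⟨_, Has.arrE (ts := []) (Ds := fun i => i.elim0) hΓ hD0
            (fun i => i.elim0) hsd ?_⟩
          intro w
          by_cases hw : w ∈ fv M₁
          · right
            rw [interFin_none hsd]
            exact (has_dom hD0 w).2 (Finset.disjoint_left.1 hdisj hw)
          · exact Or.inl ((has_dom hΓ w).2 hw)
        exact ⟨(fun ⟨Γ, h⟩ => ⟨Γ, _, h⟩) (hB (.atom 0)), fun σ _ _ => hB σ⟩
    | era x K =>
        cases hwf with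
        | era hwfK hxK =>
        have hnfK : ∀ N, ¬ Red K N := fun N hN => hnf _ (red_era hN)
        obtain ⟨⟨Γ', σ', hK⟩, -⟩ := ih K (by simp only [size] at hsz; omega)
          hwfK hsf hnfK
        refine ⟨⟨extend Γ' x [], σ', Has.thin ((has_dom hK x).2 hxK) hK⟩, ?_⟩
        intro σ _ hne
        exact absurd rfl (hne x K)
    | dup z x₁ x₂ K =>
        cases hwf with
        | dup hwfK hx₁ hx₂ hne12 hz =>
        have hnfK : ∀ N, ¬ Red K N := fun N hN => hnf _ (red_dup hN)
        obtain ⟨⟨Γ', σ', hK⟩, hBK⟩ := ih K (by simp only [size] at hsz; omega)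
          hwfK hsf hnfK
        refine ⟨?_, ?_⟩
        · obtain ⟨Γ, hΓ⟩ := cont_pack hK hne12 hx₁ hx₂ hz
          exact ⟨Γ, σ', hΓ⟩
        · intro σ _ _
          -- K is not an abstraction
          have hnabs : ∀ y K', K ≠ .abs y K' := by
            rintro y K' rfl
            exact hnf _ (red_of_cstep (CStep.root HeadStep.gamma1))
          -- K is not an erasure
          have hnera : ∀ y K', K ≠ .era y K' := by
            rintro y K' rfl
            cases hwfK with
            | era hwfK' hyK' =>
            by_cases hy1 : y = x₁
            · subst hy1
              have hx₂K' : x₂ ∈ fv K' := by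
                have := hx₂
                rw [show fv (.era y K') = insert y (fv K') from rfl,
                  Finset.mem_insert] at this
                exact this.resolve_left (Ne.symm hne12)
              obtain ⟨P, hst, hnm⟩ := exists_nf_sub (N := .var z) hwfK' hsf hx₂K' trivial
              exact hnf P (red_of_cstep (CStep.root (HeadStep.gammaOmega2 hst hnm)))
            · by_cases hy2 : y = x₂
              · subst hy2
                have hx₁K' : x₁ ∈ fv K' := by
                  have := hx₁
                  rw [show fv (.era y K') = insert y (fv K') from rfl,
                    Finset.mem_insert] at this
                  exact this.resolve_left hne12
                obtain ⟨P, hst, hnm⟩ := exists_nf_sub (N := .var z) hwfK' hsf hx₁K' trivial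
                exact hnf P ⟨_, P, SEquiv.eps2, CStep.root (HeadStep.gammaOmega2 hst hnm),
                  SEquiv.refl P⟩
              · exact hnf _ (red_of_cstep (CStep.root
                  (HeadStep.gammaOmega1 hy1 hy2)))
          -- K is not a variable
          have hnvar : ∀ y, K ≠ .var y := by
            rintro y rfl
            rw [show fv (.var y) = {y} from rfl, Finset.mem_singleton] at hx₁ hx₂
            exact hne12 (hx₁.trans hx₂.symm)
          obtain ⟨Γ'', hK''⟩ := hBK σ
            (by rintro a b rfl; exact hnabs a b rfl)
            (by rintro a b rfl; exact hnera a b rfl)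
          exact cont_pack hK'' hne12 hx₁ hx₂ hz
    | sub A x B => exact absurd hsf (by simp [SubFree])

/-- Every λ®-normal form is typeable in λ®∩. -/
theorem normal_forms_typeable {M : RTerm} (hM : WF M) (hsf : SubFree M)
    (hnf : ∀ N, ¬ Red M N) : ∃ (Γ : Ctx) (σ : SType), Has Γ M σ :=
  (typeable_main (size M) M le_rfl hM hsf hnf).1

end RC
end
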